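/- Let τ be an algebraic integer all of whose Galois conjugates (including τ itself) have complex absolute value 1. Then τ is a root of unity. -/

import Mathlib

/-- Kronecker's theorem: an algebraic integer all of whose Galois conjugates
(the complex roots of its minimal polynomial) have absolute value 1 is a root of unity. -/
theorem kronecker_root_of_unity (τ : ℂ) (hint : IsIntegral ℤ τ)
    (hconj : ∀ z : ℂ, Polynomial.aeval z (minpoly ℤ τ) = 0 → ‖z‖ = 1) :
    ∃ n : ℕ, 0 < n ∧ τ ^ n = 1 := by
  have hratint : IsIntegral ℚ τ := hint.tower_top
  let K := IntermediateField.adjoin ℚ ({τ} : Set ℂ)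
  have : FiniteDimensional ℚ K := IntermediateField.adjoin.finiteDimensional hratint
  have : NumberField K := ⟨⟩
  set x : K := IntermediateField.AdjoinSimple.gen ℚ τ with hx
  have hxval : (x : ℂ) = τ := rfl
  have hinj : Function.Injective (algebraMap K ℂ) := (algebraMap K ℂ).injective
  have hxi : IsIntegral ℤ x := by
    rw [← isIntegral_algebraMap_iff (B := ℂ) hinj]
    exact hint
  have hmin : minpoly ℚ (algebraMap K ℂ x) = minpoly ℚ x := minpoly.algebraMap_eq hinj x
  have hnorm : ∀ φ : K →+* ℂ, ‖φ x‖ = 1 := by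
    intro φ
    have hroot : Polynomial.aeval (φ x) (minpoly ℚ x) = 0 := by
      have h := Polynomial.aeval_algHom_apply (φ.toRatAlgHom) x (minpoly ℚ x)
      rw [minpoly.aeval, map_zero] at h
      exact h
    have hminτ : minpoly ℚ τ = (minpoly ℤ τ).map (algebraMap ℤ ℚ) :=
      minpoly.isIntegrallyClosed_eq_field_fractions' ℚ hint
    have hroot' : Polynomial.aeval (φ x) (minpoly ℤ τ) = 0 := by
      have : minpoly ℚ x = minpoly ℚ τ := by
        rw [← hmin]
        have h2 : algebraMap K ℂ x = τ := rfl
        rw [h2]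
      rw [this, hminτ, Polynomial.aeval_map_algebraMap] at hroot
      exact hroot
    simpa using hconj (φ x) hroot'
  obtain ⟨n, hn, hpow⟩ :=
    NumberField.Embeddings.pow_eq_one_of_norm_eq_one (A := ℂ) (K := K) hxi hnorm
  refine ⟨n, hn, ?_⟩
  have : ((x ^ n : K) : ℂ) = ((1 : K) : ℂ) := by rw [hpow]
  simpa [hxval] using this
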